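/- For matrices X and Y in the Lie algebra of a matrix Lie group, the differential of the matrix exponential satisfies (d exp)_X(Y) = e^X · Σ_{k≥0} (-ad_X)^k(Y)/(k+1)!, where ad_X(Y) = XY - YX. -/

import Mathlib

open Matrix NormedSpace

attribute [local instance] Matrix.linftyOpNormedAddCommGroup Matrix.linftyOpNormedRing
  Matrix.linftyOpNormedAlgebra

namespace Stmt16

set_option linter.unusedSectionVars false
set_option synthInstance.maxHeartbeats 1000000
set_option maxHeartbeats 1000000

open Finset

/-- Key polynomial identity: for commuting `u w`,
`∑_{j≤n} u^(n-j) (u+w)^j = ∑_{t≤n} C(n+1,t+1) u^(n-t) w^t`. -/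
lemma r_id {B : Type*} [Ring B] {u w : B} (h : Commute u w) (n : ℕ) :
    ∑ j ∈ Finset.range (n+1), u^(n-j) * (u+w)^j
      = ∑ t ∈ Finset.range (n+1), (n+1).choose (t+1) • (u^(n-t) * w^t) := by
  induction n with
  | zero => simp
  | succ n ih =>
    have hl : ∑ j ∈ Finset.range (n+2), u^(n+1-j) * (u+w)^j
        = (u+w)^(n+1) + u * ∑ j ∈ Finset.range (n+1), u^(n-j) * (u+w)^j := by
      rw [Finset.sum_range_succ, Finset.mul_sum, add_comm]
      congr 1
      · simp
      · refine Finset.sum_congr rfl fun j hj => ?_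
        have hj' : j ≤ n := Nat.lt_succ_iff.mp (Finset.mem_range.mp hj)
        have h2 : n+1-j = (n-j)+1 := by omega
        rw [h2, pow_succ', mul_assoc]
    have hexp : (u+w)^(n+1)
        = ∑ t ∈ Finset.range (n+2), (n+1).choose t • (u^(n+1-t) * w^t) := by
      rw [add_comm u w, (h.symm).add_pow]
      refine Finset.sum_congr rfl fun t ht => ?_
      rw [(h.symm.pow_pow t (n+1-t)).eq, nsmul_eq_mul, (Nat.cast_commute ((n+1).choose t) _).eq]
    rw [hl, ih, Finset.mul_sum, hexp, Finset.sum_range_succ, Finset.sum_range_succ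
      (fun t => (n+2).choose (t+1) • (u^(n+1-t) * w^t)) (n+1)]
    have hb : (n+1).choose (n+1) • (u^(n+1-(n+1)) * w^(n+1))
        = (n+2).choose (n+1+1) • (u^(n+1-(n+1)) * w^(n+1)) := by
      simp
    rw [add_right_comm, hb]
    congr 1
    rw [← Finset.sum_add_distrib]
    refine Finset.sum_congr rfl fun t ht => ?_
    have ht' : t ≤ n := Nat.lt_succ_iff.mp (Finset.mem_range.mp ht)
    rw [mul_smul_comm]
    have h2 : u * (u^(n-t) * w^t) = u^(n+1-t) * w^t := by
      rw [← mul_assoc, ← pow_succ']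
      congr 2
      omega
    rw [h2, ← add_nsmul]
    congr 1

section

variable {A : Type*} [NormedRing A] [NormedAlgebra ℂ A] [CompleteSpace A]

noncomputable def lX (X : A) : A →L[ℂ] A := ContinuousLinearMap.mul ℂ A X
noncomputable def rX (X : A) : A →L[ℂ] A := (ContinuousLinearMap.mul ℂ A).flip X
noncomputable def sX (X : A) : A →L[ℂ] A := rX X - lX X
noncomputable def P (X : A) (n : ℕ) : A →L[ℂ] A :=
  ∑ j ∈ Finset.range (n+1), lX X ^ (n-j) * rX X ^ j
noncomputable def D (X : A) : A →L[ℂ] A :=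
  ∑' n : ℕ, (((n+1).factorial : ℂ))⁻¹ • P X n
def S (X : A) (n : ℕ) (Y : A) : A := ∑ i ∈ Finset.range n, X^i * Y * X^(n-1-i)

lemma norm_clm_pow_le (f : A →L[ℂ] A) (k : ℕ) : ‖f^k‖ ≤ ‖f‖^k := by
  induction k with
  | zero =>
    rw [pow_zero, pow_zero]; exact ContinuousLinearMap.norm_id_le
  | succ k ih =>
    calc ‖f^(k+1)‖ ≤ ‖f^k‖ * ‖f‖ := by rw [pow_succ]; exact norm_mul_le _ _
      _ ≤ ‖f‖^k * ‖f‖ := by gcongr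
      _ = ‖f‖^(k+1) := by rw [pow_succ]

variable (X Y : A)

lemma norm_pow_mul_le (i : ℕ) (Z : A) : ‖X^i * Z‖ ≤ ‖X‖^i * ‖Z‖ := by
  induction i generalizing Z with
  | zero => simp
  | succ i ih =>
    rw [pow_succ', mul_assoc]
    calc ‖X * (X^i * Z)‖ ≤ ‖X‖ * ‖X^i * Z‖ := norm_mul_le _ _
      _ ≤ ‖X‖ * (‖X‖^i * ‖Z‖) := by gcongr; exact ih Z
      _ = ‖X‖^(i+1) * ‖Z‖ := by rw [pow_succ']; ring

lemma norm_triple (i j : ℕ) : ‖X^i * Y * X^j‖ ≤ ‖X‖^i * ‖Y‖ * ‖X‖^j := by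
  rw [mul_assoc]
  calc ‖X^i * (Y * X^j)‖ ≤ ‖X‖^i * ‖Y * X^j‖ := norm_pow_mul_le X i _
    _ ≤ ‖X‖^i * (‖Y * X^j‖) := le_rfl
    _ ≤ ‖X‖^i * (‖Y‖ * ‖X‖^j) := by
        gcongr
        induction j generalizing Y with
        | zero => simp
        | succ j ih =>
          rw [pow_succ, ← mul_assoc]
          calc ‖Y * X^j * X‖ ≤ ‖Y * X^j‖ * ‖X‖ := norm_mul_le _ _
            _ ≤ (‖Y‖ * ‖X‖^j) * ‖X‖ := by gcongr; exact ih Y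
            _ = ‖Y‖ * ‖X‖^(j+1) := by rw [pow_succ]; ring
    _ = ‖X‖^i * ‖Y‖ * ‖X‖^j := by ring

lemma lX_apply : lX X Y = X * Y := rfl
lemma rX_apply : rX X Y = Y * X := rfl
lemma sX_apply : sX X Y = Y * X - X * Y := by
  simp [sX, lX_apply, rX_apply]

lemma norm_lX_le : ‖lX X‖ ≤ ‖X‖ := ContinuousLinearMap.opNorm_mul_apply_le ℂ A X

lemma norm_rX_le : ‖rX X‖ ≤ ‖X‖ := by
  refine ContinuousLinearMap.opNorm_le_bound _ (norm_nonneg X) fun Y => ?_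
  rw [mul_comm]
  exact norm_mul_le Y X

lemma commute_lr : Commute (lX X) (rX X) := by
  ext Y
  simp only [ContinuousLinearMap.mul_apply, lX_apply, rX_apply,
    Function.comp, mul_assoc]

lemma commute_ls : Commute (lX X) (sX X) :=
  (commute_lr X).sub_right (Commute.refl _)

lemma lX_pow_apply (i : ℕ) : (lX X ^ i) Y = X ^ i * Y := by
  induction i generalizing Y with
  | zero => simp
  | succ i ih =>
    rw [pow_succ', ContinuousLinearMap.mul_apply, lX_apply, ih, pow_succ', mul_assoc]

lemma rX_pow_apply (j : ℕ) : (rX X ^ j) Y = Y * X ^ j := by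
  induction j generalizing Y with
  | zero => simp
  | succ j ih =>
    rw [pow_succ', ContinuousLinearMap.mul_apply, rX_apply, ih, pow_succ, mul_assoc]

lemma P_apply (m : ℕ) : P X m Y = ∑ j ∈ Finset.range (m+1), X^(m-j) * Y * X^j := by
  simp only [P, ContinuousLinearMap.sum_apply, ContinuousLinearMap.mul_apply,
    rX_pow_apply, lX_pow_apply, mul_assoc]

lemma norm_P_le (m : ℕ) : ‖P X m‖ ≤ (m+1) * ‖X‖^m := by
  calc ‖P X m‖ ≤ ∑ j ∈ Finset.range (m+1), ‖lX X ^ (m-j) * rX X ^ j‖ :=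
        norm_sum_le _ _
    _ ≤ ∑ j ∈ Finset.range (m+1), ‖X‖^m := by
        refine Finset.sum_le_sum fun j hj => ?_
        have hj' : j ≤ m := Nat.lt_succ_iff.mp (Finset.mem_range.mp hj)
        calc ‖lX X ^ (m-j) * rX X ^ j‖ ≤ ‖lX X ^ (m-j)‖ * ‖rX X ^ j‖ := norm_mul_le _ _
          _ ≤ ‖lX X‖^(m-j) * ‖rX X‖^j := by
              exact mul_le_mul (norm_clm_pow_le _ _) (norm_clm_pow_le _ _)
                (norm_nonneg _) (by positivity)
          _ ≤ ‖X‖^(m-j) * ‖X‖^j := by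
              gcongr <;> first | exact norm_lX_le X | exact norm_rX_le X
          _ = ‖X‖^m := by rw [← pow_add]; congr 1; omega
    _ = (m+1) * ‖X‖^m := by
        rw [Finset.sum_const, Finset.card_range]
        simp [nsmul_eq_mul]

lemma summable_norm_P :
    Summable fun m : ℕ => ‖(((m+1).factorial : ℂ))⁻¹ • P X m‖ := by
  refine Summable.of_nonneg_of_le (fun m => norm_nonneg _)
    (fun m => ?_) (Real.summable_pow_div_factorial ‖X‖)
  rw [norm_smul ((((m+1).factorial : ℂ))⁻¹) (P X m), norm_inv, Complex.norm_natCast]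
  calc ((((m+1).factorial : ℝ))⁻¹) * ‖P X m‖
      ≤ ((((m+1).factorial : ℝ))⁻¹) * ((m+1) * ‖X‖^m) := by
        gcongr
        exact norm_P_le X m
    _ = ‖X‖^m / m.factorial := by
        rw [Nat.factorial_succ]
        push_cast
        have h1 : (m.factorial : ℝ) ≠ 0 := by positivity
        field_simp
    _ ≤ ‖X‖^m / m.factorial := le_rfl

lemma summable_norm_s :
    Summable fun k : ℕ => ‖(((k+1).factorial : ℂ))⁻¹ • sX X ^ k‖ := by
  refine Summable.of_nonneg_of_le (fun m => norm_nonneg _)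
    (fun k => ?_) (Real.summable_pow_div_factorial ‖sX X‖)
  rw [norm_smul ((((k+1).factorial : ℂ))⁻¹) (sX X ^ k), norm_inv, Complex.norm_natCast]
  calc ((((k+1).factorial : ℝ))⁻¹) * ‖sX X ^ k‖
      ≤ (((k.factorial : ℝ))⁻¹) * ‖sX X‖^k := by
        gcongr
        · exact Nat.le_succ k
        · exact norm_clm_pow_le _ _
    _ = ‖sX X‖^k / k.factorial := by rw [div_eq_mul_inv, mul_comm]

lemma S_zero : S X 0 Y = 0 := by simp [S]

lemma S_one : S X 1 Y = Y := by simp [S]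

lemma S_succ (m : ℕ) : S X (m+1) Y = S X m Y * X + X^m * Y := by
  rw [S, Finset.sum_range_succ]
  congr 1
  · rw [S, Finset.sum_mul]
    refine Finset.sum_congr rfl fun i hi => ?_
    have hi' : i < m := Finset.mem_range.mp hi
    have h2 : (m + 1 - 1 - i) = (m - 1 - i) + 1 := by omega
    rw [h2, pow_succ, ← mul_assoc]
  · simp

lemma norm_S_le (m : ℕ) : ‖S X (m+1) Y‖ ≤ (m+1) * ‖X‖^m * ‖Y‖ := by
  calc ‖S X (m+1) Y‖ ≤ ∑ i ∈ Finset.range (m+1), ‖X^i * Y * X^(m+1-1-i)‖ := by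
        rw [S]
        exact norm_sum_le _ _
    _ ≤ ∑ i ∈ Finset.range (m+1), ‖X‖^m * ‖Y‖ := by
        refine Finset.sum_le_sum fun i hi => ?_
        have hi' : i ≤ m := Nat.lt_succ_iff.mp (Finset.mem_range.mp hi)
        calc ‖X^i * Y * X^(m+1-1-i)‖ ≤ ‖X‖^i * ‖Y‖ * ‖X‖^(m+1-1-i) :=
              norm_triple X Y i _
          _ = ‖X‖^m * ‖Y‖ := by
              rw [mul_right_comm, ← pow_add]
              congr 2
              omega
    _ = (m+1) * ‖X‖^m * ‖Y‖ := by
        rw [Finset.sum_const, Finset.card_range]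
        simp [nsmul_eq_mul, mul_assoc]

lemma P_eq_S (m : ℕ) : P X m Y = S X (m+1) Y := by
  rw [P_apply, S]
  simp only [Nat.add_sub_cancel]
  rw [← Finset.sum_range_reflect (fun i => X^i * Y * X^(m-i)) (m+1)]
  refine Finset.sum_congr rfl fun j hj => ?_
  have hj' : j ≤ m := Nat.lt_succ_iff.mp (Finset.mem_range.mp hj)
  simp only [Nat.add_sub_cancel]
  congr 2
  omega

lemma summable_P : Summable fun m : ℕ => (((m+1).factorial : ℂ))⁻¹ • P X m :=
  (summable_norm_P X).of_norm

lemma D_apply : D X Y = ∑' m : ℕ, (((m+1).factorial : ℂ))⁻¹ • S X (m+1) Y := by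
  have h := (ContinuousLinearMap.apply ℂ A Y).map_tsum (summable_P X)
  calc D X Y = (ContinuousLinearMap.apply ℂ A Y) (D X) := rfl
    _ = ∑' m : ℕ, (ContinuousLinearMap.apply ℂ A Y) ((((m+1).factorial : ℂ))⁻¹ • P X m) := h
    _ = ∑' m : ℕ, (((m+1).factorial : ℂ))⁻¹ • S X (m+1) Y := by
        refine tsum_congr fun m => ?_
        rw [_root_.map_smul]
        simp only [ContinuousLinearMap.apply_apply]
        rw [P_eq_S]

lemma summable_SY : Summable fun m : ℕ => ((m.factorial : ℂ))⁻¹ • S X m Y := by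
  rw [← summable_nat_add_iff 1]
  have h : (fun m : ℕ => (((m+1).factorial : ℂ))⁻¹ • S X (m+1) Y)
      = fun m : ℕ => (ContinuousLinearMap.apply ℂ A Y) ((((m+1).factorial : ℂ))⁻¹ • P X m) := by
    funext m
    rw [_root_.map_smul]
    simp only [ContinuousLinearMap.apply_apply]
    rw [P_eq_S]
  exact h ▸ (summable_P X).map (ContinuousLinearMap.apply ℂ A Y)
    (ContinuousLinearMap.apply ℂ A Y).continuous

lemma D_apply' : D X Y = ∑' m : ℕ, ((m.factorial : ℂ))⁻¹ • S X m Y := by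
  rw [D_apply, Summable.tsum_eq_zero_add (summable_SY X Y), S_zero, smul_zero, zero_add]

lemma T_succ (m : ℕ) :
    (X+Y)^(m+1) - X^(m+1) - S X (m+1) Y
      = S X m Y * Y + ((X+Y)^m - X^m - S X m Y) * (X+Y) := by
  rw [S_succ, pow_succ, pow_succ]
  noncomm_ring

lemma norm_T_le (m : ℕ) :
    ‖(X+Y)^(m+2) - X^(m+2) - S X (m+2) Y‖
      ≤ (m+2) * (m+1) * (‖X‖+‖Y‖)^m * ‖Y‖^2 := by
  induction m with
  | zero =>
    have hT2 : (X+Y)^2 - X^2 - S X 2 Y = Y * Y := by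
      have : S X 2 Y = Y * X + X * Y := by
        rw [S_succ, S_one, pow_one]
      rw [this]
      noncomm_ring
    rw [hT2]
    have := norm_mul_le Y Y
    push_cast
    nlinarith [norm_nonneg Y, norm_mul_le Y Y, sq_nonneg ‖Y‖]
  | succ m ih =>
    have e : ((m+1)+2) = (m+2)+1 := rfl
    rw [e, T_succ X Y (m+2)]
    refine (norm_add_le _ _).trans ?_
    set a := ‖X‖ + ‖Y‖ with ha
    have hX0 : (0:ℝ) ≤ ‖X‖ := norm_nonneg X
    have hY0 : (0:ℝ) ≤ ‖Y‖ := norm_nonneg Y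
    have ha0 : (0:ℝ) ≤ a := by positivity
    have hpa : (0:ℝ) ≤ a^m := by positivity
    have hS : ‖S X (m+2) Y‖ ≤ (m+2) * ‖X‖^(m+1) * ‖Y‖ := by
      have := norm_S_le X Y (m+1)
      push_cast at this ⊢
      convert this using 2
      ring
    have hpow : ‖X‖^(m+1) ≤ a^(m+1) := by
      apply pow_le_pow_left₀ hX0
      simp [ha]
    have hXY : ‖X + Y‖ ≤ a := norm_add_le X Y
    have h1 : ‖S X (m+2) Y * Y‖ ≤ (((m:ℝ)+2) * ‖X‖^(m+1) * ‖Y‖) * ‖Y‖ := by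
      refine (norm_mul_le _ _).trans ?_
      exact mul_le_mul_of_nonneg_right hS hY0
    have h2 : ‖((X+Y)^(m+2) - X^(m+2) - S X (m+2) Y) * (X+Y)‖
        ≤ ((m+2) * (m+1) * a^m * ‖Y‖^2) * a := by
      refine (norm_mul_le _ _).trans ?_
      have hT0 : (0:ℝ) ≤ ‖(X+Y)^(m+2) - X^(m+2) - S X (m+2) Y‖ := norm_nonneg _
      calc ‖(X+Y)^(m+2) - X^(m+2) - S X (m+2) Y‖ * ‖X+Y‖
          ≤ ((m+2) * (m+1) * a^m * ‖Y‖^2) * ‖X+Y‖ := by gcongr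
        _ ≤ ((m+2) * (m+1) * a^m * ‖Y‖^2) * a := by
            have : (0:ℝ) ≤ (m+2) * (m+1) * a^m * ‖Y‖^2 := by positivity
            exact mul_le_mul_of_nonneg_left hXY this
    refine (add_le_add h1 h2).trans ?_
    rw [pow_succ a m] at hpow
    rw [show (‖X‖+‖Y‖)^(m+1) = a^m * a from pow_succ a m]
    push_cast
    nlinarith [hpow, hY0, ha0, hpa, sq_nonneg ‖Y‖,
      mul_le_mul_of_nonneg_right hpow (sq_nonneg ‖Y‖),
      mul_nonneg (mul_nonneg hpa ha0) (sq_nonneg ‖Y‖)]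

lemma key_bound (hY : ‖Y‖ ≤ 1) :
    ‖exp (X + Y) - exp X - D X Y‖
      ≤ (∑' m : ℕ, ((m.factorial : ℝ))⁻¹ * (‖X‖+1)^m) * ‖Y‖^2 := by
  set T : ℕ → A := fun m => (X+Y)^m - X^m - S X m Y with hT
  have h1 : Summable fun m : ℕ => ((m.factorial : ℂ))⁻¹ • (X+Y)^m :=
    expSeries_summable' (𝕂 := ℂ) (X+Y)
  have h2 : Summable fun m : ℕ => ((m.factorial : ℂ))⁻¹ • X^m :=
    expSeries_summable' (𝕂 := ℂ) X
  have h3 := summable_SY X Y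
  have hE : exp (X + Y) - exp X - D X Y = ∑' m : ℕ, ((m.factorial : ℂ))⁻¹ • T m := by
    rw [D_apply']
    simp only [exp_eq_tsum ℂ]
    rw [← Summable.tsum_sub h1 h2, ← Summable.tsum_sub (h1.sub h2) h3]
    exact tsum_congr fun m => by simp [hT, smul_sub]
  have hTb : ∀ m : ℕ, ‖T (m+2)‖ ≤ (m+2)*(m+1)*(‖X‖+1)^m*‖Y‖^2 := by
    intro m
    refine (norm_T_le X Y m).trans ?_
    have hb : ‖X‖ + ‖Y‖ ≤ ‖X‖ + 1 := by linarith
    have hb0 : (0:ℝ) ≤ ‖X‖ + ‖Y‖ := by positivity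
    gcongr
  have hu : ∀ m : ℕ, ‖(((m+2).factorial : ℂ))⁻¹ • T (m+2)‖
      ≤ ((m.factorial:ℝ))⁻¹ * (‖X‖+1)^m * ‖Y‖^2 := by
    intro m
    rw [norm_smul ((((m+2).factorial : ℂ))⁻¹) (T (m+2)), norm_inv, Complex.norm_natCast]
    calc (((m+2).factorial:ℝ))⁻¹ * ‖T (m+2)‖
        ≤ (((m+2).factorial:ℝ))⁻¹ * ((m+2)*(m+1)*(‖X‖+1)^m*‖Y‖^2) := by
          gcongr
          exact hTb m
      _ = ((m.factorial:ℝ))⁻¹ * (‖X‖+1)^m * ‖Y‖^2 := by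
          rw [show ((m+2).factorial) = (m+2)*((m+1)*m.factorial) from by
            rw [Nat.factorial_succ, Nat.factorial_succ]]
          have hm : (m.factorial:ℝ) ≠ 0 := by positivity
          push_cast
          field_simp
  have hw : Summable (fun m : ℕ => ((m.factorial:ℝ))⁻¹ * (‖X‖+1)^m * ‖Y‖^2) := by
    have := (Real.summable_pow_div_factorial (‖X‖+1)).mul_right (‖Y‖^2)
    refine this.congr fun m => ?_
    rw [div_eq_mul_inv]
    ring
  have hsh : Summable fun m : ℕ => ‖(((m+2).factorial : ℂ))⁻¹ • T (m+2)‖ :=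
    Summable.of_nonneg_of_le (fun _ => norm_nonneg _) hu hw
  have hnorm_summ : Summable fun m : ℕ => ‖((m.factorial : ℂ))⁻¹ • T m‖ := by
    rw [← summable_nat_add_iff 2]
    exact hsh
  have hT0 : T 0 = 0 := by simp [hT, S_zero]
  have hT1 : T 1 = 0 := by simp [hT, S_one]
  rw [hE]
  refine (norm_tsum_le_tsum_norm hnorm_summ).trans ?_
  have e1 : (∑' m : ℕ, ‖((m.factorial : ℂ))⁻¹ • T m‖)
      = ∑' m : ℕ, ‖(((m+2).factorial : ℂ))⁻¹ • T (m+2)‖ := by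
    rw [Summable.tsum_eq_zero_add hnorm_summ]
    rw [Summable.tsum_eq_zero_add ((summable_nat_add_iff 1).mpr hnorm_summ)]
    simp [hT0, hT1]
  rw [e1]
  calc (∑' m : ℕ, ‖(((m+2).factorial : ℂ))⁻¹ • T (m+2)‖)
      ≤ ∑' m : ℕ, ((m.factorial:ℝ))⁻¹ * (‖X‖+1)^m * ‖Y‖^2 := Summable.tsum_le_tsum hu hsh hw
    _ = (∑' m : ℕ, ((m.factorial : ℝ))⁻¹ * (‖X‖+1)^m) * ‖Y‖^2 := tsum_mul_right

lemma hasFDeriv : HasFDerivAt (exp) (D X) X := by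
  rw [hasFDerivAt_iff_isLittleO_nhds_zero]
  have hbig : (fun h : A => exp (X + h) - exp X - D X h)
      =O[nhds 0] fun h : A => ‖h‖^2 := by
    rw [Asymptotics.isBigO_iff]
    refine ⟨∑' m : ℕ, ((m.factorial : ℝ))⁻¹ * (‖X‖+1)^m, ?_⟩
    filter_upwards [Metric.closedBall_mem_nhds (0:A) one_pos] with Y hY
    rw [Metric.mem_closedBall, dist_zero_right] at hY
    calc ‖exp (X + Y) - exp X - D X Y‖
        ≤ (∑' m : ℕ, ((m.factorial : ℝ))⁻¹ * (‖X‖+1)^m) * ‖Y‖^2 := key_bound X Y hY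
      _ = (∑' m : ℕ, ((m.factorial : ℝ))⁻¹ * (‖X‖+1)^m) * ‖‖Y‖^2‖ := by
          rw [Real.norm_of_nonneg (by positivity)]
  have hlittle : (fun h : A => ‖h‖^2) =o[nhds 0] fun h : A => h := by
    rw [Asymptotics.isLittleO_iff]
    intro c hc
    filter_upwards [Metric.closedBall_mem_nhds (0:A) hc] with Y hY
    rw [Metric.mem_closedBall, dist_zero_right] at hY
    rw [Real.norm_of_nonneg (by positivity : (0:ℝ) ≤ ‖Y‖^2)]
    calc ‖Y‖^2 = ‖Y‖ * ‖Y‖ := sq ‖Y‖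
      _ ≤ c * ‖Y‖ := mul_le_mul_of_nonneg_right hY (norm_nonneg Y)
  exact hbig.trans_isLittleO hlittle

lemma rX_eq : rX X = lX X + sX X := by rw [sX, add_sub_cancel]

lemma choose_coeff (m t : ℕ) (ht : t ≤ m) :
    (((m-t).factorial : ℂ))⁻¹ * (((t+1).factorial : ℂ))⁻¹
      = (((m+1).factorial : ℂ))⁻¹ * ((m+1).choose (t+1) : ℂ) := by
  have key := Nat.choose_mul_factorial_mul_factorial (Nat.succ_le_succ ht)
  have h2 : (m+1) - (t+1) = m - t := by omega
  rw [h2] at key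
  have h3 : ((m+1).choose (t+1) : ℂ) * ((t+1).factorial : ℂ) * ((m-t).factorial : ℂ)
      = ((m+1).factorial : ℂ) := by exact_mod_cast congrArg (Nat.cast : ℕ → ℂ) key
  have f1 : ((m-t).factorial : ℂ) ≠ 0 := Nat.cast_ne_zero.mpr (Nat.factorial_ne_zero _)
  have f2 : (((t+1)).factorial : ℂ) ≠ 0 := Nat.cast_ne_zero.mpr (Nat.factorial_ne_zero _)
  have f3 : (((m+1)).factorial : ℂ) ≠ 0 := Nat.cast_ne_zero.mpr (Nat.factorial_ne_zero _)
  have hC : ((m+1).choose (t+1) : ℂ)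
      = ((m+1).factorial : ℂ) / (((t+1).factorial : ℂ) * ((m-t).factorial : ℂ)) := by
    field_simp
    linear_combination h3
  rw [hC, div_eq_mul_inv, ← mul_assoc, inv_mul_cancel₀ f3, one_mul, mul_inv, mul_comm]

lemma D_eq : D X = exp (lX X) * (∑' k : ℕ, (((k+1).factorial : ℂ))⁻¹ • sX X ^ k) := by
  have hLnorm : Summable fun m : ℕ => ‖((m.factorial : ℂ))⁻¹ • lX X ^ m‖ :=
    norm_expSeries_summable' (𝕂 := ℂ) (lX X)
  have hGnorm := summable_norm_s X
  rw [exp_eq_tsum ℂ]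
  rw [tsum_mul_tsum_eq_tsum_sum_antidiagonal_of_summable_norm hLnorm hGnorm]
  rw [D]
  refine tsum_congr fun m => ?_
  rw [Finset.Nat.sum_antidiagonal_eq_sum_range_succ_mk]
  have hP : P X m = ∑ t ∈ Finset.range (m+1), (m+1).choose (t+1) • (lX X^(m-t) * sX X^t) := by
    rw [P]
    simp only [rX_eq]
    exact r_id (commute_ls X) m
  rw [hP, Finset.smul_sum,
    ← Finset.sum_range_reflect
      (fun t => (((m+1).factorial : ℂ))⁻¹ • ((m+1).choose (t+1) • (lX X^(m-t) * sX X^t))) (m+1)]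
  refine Finset.sum_congr rfl fun i hi => ?_
  have hi' : i ≤ m := Nat.lt_succ_iff.mp (Finset.mem_range.mp hi)
  simp only [Nat.add_sub_cancel]
  have h4 : m - (m - i) = i := by omega
  rw [h4, ← Nat.cast_smul_eq_nsmul ℂ, smul_smul]
  conv_rhs => rw [ContinuousLinearMap.mul_def, ContinuousLinearMap.smul_comp,
    ContinuousLinearMap.comp_smul, smul_smul]
  rw [ContinuousLinearMap.mul_def]
  congr 1
  have h6 := (choose_coeff m (m - i) (by omega)).symm
  rw [h4] at h6
  exact h6

lemma exp_lX : exp (lX X) = ContinuousLinearMap.mul ℂ A (exp X) := by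
  let φ : A →ₐ[ℂ] (A →L[ℂ] A) :=
    AlgHom.ofLinearMap (ContinuousLinearMap.mul ℂ A).toLinearMap
      (by ext Y; simp) (fun x y => by ext Y; simp [mul_assoc])
  have hcont : Continuous φ := (ContinuousLinearMap.mul ℂ A).continuous
  exact (map_exp_of_mem_ball (𝕂 := ℂ) φ hcont X
    ((expSeries_radius_eq_top ℂ A).symm ▸ edist_lt_top _ _)).symm

lemma sX_pow_apply (k : ℕ) :
    (sX X ^ k) Y = ((-(LinearMap.mulLeft ℂ X - LinearMap.mulRight ℂ X)) ^ k) Y := by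
  induction k generalizing Y with
  | zero => simp
  | succ k ih =>
    rw [pow_succ', ContinuousLinearMap.mul_apply, pow_succ', Module.End.mul_apply, ih, sX_apply]
    simp

lemma summable_s : Summable fun k : ℕ => (((k+1).factorial : ℂ))⁻¹ • sX X ^ k :=
  (summable_norm_s X).of_norm

lemma D_apply_final :
    D X Y = exp X * ∑' k : ℕ, (((k+1).factorial : ℂ))⁻¹ •
      (((-(LinearMap.mulLeft ℂ X - LinearMap.mulRight ℂ X)) ^ k) Y) := by
  rw [D_eq, ContinuousLinearMap.mul_apply, exp_lX, ContinuousLinearMap.mul_apply']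
  congr 1
  have h := (ContinuousLinearMap.apply ℂ A Y).map_tsum (summable_s X)
  calc (∑' k : ℕ, (((k+1).factorial : ℂ))⁻¹ • sX X ^ k) Y
      = ∑' k : ℕ, (ContinuousLinearMap.apply ℂ A Y) ((((k+1).factorial : ℂ))⁻¹ • sX X ^ k) := h
    _ = ∑' k : ℕ, (((k+1).factorial : ℂ))⁻¹ •
          (((-(LinearMap.mulLeft ℂ X - LinearMap.mulRight ℂ X)) ^ k) Y) := by
        refine tsum_congr fun k => ?_
        rw [_root_.map_smul]
        simp only [ContinuousLinearMap.apply_apply]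
        rw [sX_pow_apply]

end

end Stmt16

/-- The differential of the matrix exponential satisfies
`(d exp)_X (Y) = e^X * ∑_{k ≥ 0} (-ad_X)^k (Y) / (k+1)!` where `ad_X Y = XY - YX`. -/
theorem stmt_16 (n : ℕ) (X : Matrix (Fin n) (Fin n) ℂ) :
    ∃ L : Matrix (Fin n) (Fin n) ℂ →L[ℂ] Matrix (Fin n) (Fin n) ℂ,
      HasFDerivAt (exp) L X ∧
      ∀ Y : Matrix (Fin n) (Fin n) ℂ,
        L Y = exp X *
          ∑' k : ℕ, (((k + 1).factorial : ℂ))⁻¹ •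
            (((-(LinearMap.mulLeft ℂ X - LinearMap.mulRight ℂ X)) ^ k) Y) := by
  exact ⟨Stmt16.D X, Stmt16.hasFDeriv X, fun Y => Stmt16.D_apply_final X Y⟩
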